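/- For each k ≥ 1, the set Φ_k is closed under the operations j ↦ 2j and j ↦ 4j + 1, and contains no element of the form 4j - 1 with j ∈ Φ_k. -/

import Mathlib

/-- A natural number is fibbinary if its binary representation has no two consecutive 1 bits. -/
def Fibbinary (m : ℕ) : Prop := ∀ i : ℕ, ¬(m.testBit i ∧ m.testBit (i + 1))

def Phi (k : ℕ) : Set ℕ :=
  {m : ℕ | ∃ r q : ℕ, Odd q ∧ Fibbinary q ∧
    m = 2 ^ r * (q + (2 * k - 1) * 2 ^ Nat.size q)}

lemma size_two_pow_mul_add_one {q t : ℕ} (hq : 0 < q) (ht : 1 ≤ t) :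
    Nat.size (2 ^ t * q + 1) = t + Nat.size q := by
  set s := Nat.size q with hs
  have hs1 : 1 ≤ s := Nat.size_pos.2 hq
  apply le_antisymm
  · rw [Nat.size_le]
    have hq' : q + 1 ≤ 2 ^ s := Nat.lt_size_self q
    calc 2 ^ t * q + 1 < 2 ^ t * q + 2 ^ t := by
          have : 1 < 2 ^ t := by
            calc 1 < 2 := one_lt_two
            _ ≤ 2 ^ t := Nat.le_self_pow (by omega) 2
          omega
      _ = 2 ^ t * (q + 1) := by ring
      _ ≤ 2 ^ t * 2 ^ s := Nat.mul_le_mul_left _ hq'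
      _ = 2 ^ (t + s) := by rw [pow_add]
  · have h1 : 2 ^ (s - 1) ≤ q := Nat.lt_size.1 (by omega)
    have h2 : 2 ^ (t + s - 1) ≤ 2 ^ t * q + 1 := by
      calc 2 ^ (t + s - 1) = 2 ^ t * 2 ^ (s - 1) := by
            rw [← pow_add]; congr 1; omega
        _ ≤ 2 ^ t * q := Nat.mul_le_mul_left _ h1
        _ ≤ 2 ^ t * q + 1 := by omega
    have := Nat.lt_size.2 h2
    omega

lemma fibbinary_two_pow_mul_add_one {q t : ℕ} (hfib : Fibbinary q) (ht : 2 ≤ t) :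
    Fibbinary (2 ^ t * q + 1) := by
  intro i ⟨h1, h2⟩
  have hb : ∀ j : ℕ, (2 ^ t * q + 1).testBit j =
      if j < t then Nat.testBit 1 j else q.testBit (j - t) := fun j =>
    Nat.testBit_two_pow_mul_add q (by
      calc 1 < 2 := one_lt_two
      _ ≤ 2 ^ t := Nat.le_self_pow (by omega) 2) j
  rw [hb] at h1 h2
  by_cases hi : i + 1 < t
  · rw [if_pos hi] at h2
    have := Nat.testBit_one_eq_true_iff_self_eq_zero.1 h2
    omega
  · by_cases hi' : i < t
    · rw [if_pos hi'] at h1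
      have := Nat.testBit_one_eq_true_iff_self_eq_zero.1 h1
      omega
    · rw [if_neg hi] at h2
      rw [if_neg hi'] at h1
      have : i + 1 - t = (i - t) + 1 := by omega
      rw [this] at h2
      exact hfib (i - t) ⟨h1, h2⟩

lemma phi_lower_bound {k : ℕ} (hk : 1 ≤ k) {m : ℕ} (hm : m ∈ Phi k) : 4 * k - 1 ≤ m := by
  obtain ⟨r, q, hodd, _, heq⟩ := hm
  have hq : 0 < q := hodd.pos
  have hs : 1 ≤ Nat.size q := Nat.size_pos.2 hq
  have h2 : 2 ≤ 2 ^ Nat.size q := by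
    calc 2 = 2 ^ 1 := rfl
    _ ≤ 2 ^ Nat.size q := Nat.pow_le_pow_right (by omega) hs
  have h3 : (2 * k - 1) * 2 ≤ (2 * k - 1) * 2 ^ Nat.size q := Nat.mul_le_mul_left _ h2
  have h4 : q + (2 * k - 1) * 2 ^ Nat.size q ≤ m := by
    rw [heq]
    exact Nat.le_mul_of_pos_left _ (Nat.two_pow_pos r)
  omega

lemma odd_fib_mod_four {q : ℕ} (hodd : Odd q) (hfib : Fibbinary q) (hq : 1 < q) :
    q % 4 = 1 ∧ 3 ≤ Nat.size q := by
  have h0 := hfib 0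
  simp only [Nat.testBit_eq_decide_div_mod_eq, pow_zero, pow_one, Nat.div_one, decide_eq_true_eq,
    not_and] at h0
  have hodd' : q % 2 = 1 := Nat.odd_iff.1 hodd
  have hmod : q % 4 = 1 := by omega
  refine ⟨hmod, ?_⟩
  have hq5 : 4 ≤ q := by omega
  have : 2 < Nat.size q := Nat.lt_size.2 (by norm_num; omega)
  omega

theorem phi_closure (k : ℕ) (hk : 1 ≤ k) :
    (∀ j ∈ Phi k, 2 * j ∈ Phi k ∧ 4 * j + 1 ∈ Phi k) ∧
    (∀ j ∈ Phi k, 4 * j - 1 ∉ Phi k) := by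
  constructor
  · rintro j ⟨r, q, hodd, hfib, heq⟩
    constructor
    · exact ⟨r + 1, q, hodd, hfib, by rw [heq]; ring⟩
    · refine ⟨0, 2 ^ (r + 2) * q + 1, ?_, fibbinary_two_pow_mul_add_one hfib (by omega), ?_⟩
      · exact ⟨2 ^ (r + 1) * q, by ring⟩
      · rw [size_two_pow_mul_add_one hodd.pos (by omega), heq]
        rw [pow_add, pow_add, pow_add]
        ring
  · rintro j hj ⟨r, q, hodd, hfib, heq⟩
    have hjlb : 4 * k - 1 ≤ j := phi_lower_bound hk hj
    have hj1 : 1 ≤ j := by omega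
    -- r must be 0 since 4j-1 is odd
    rcases r with _ | r'
    · rw [pow_zero, one_mul] at heq
      have hq : 0 < q := hodd.pos
      rcases eq_or_lt_of_le (show 1 ≤ q from hq) with h1 | h1
      · -- q = 1
        rw [← h1, Nat.size_one] at heq
        simp at heq
        omega
      · obtain ⟨hmod, hsz⟩ := odd_fib_mod_four hodd hfib h1
        obtain ⟨c, hc⟩ : (8 : ℕ) ∣ 2 ^ Nat.size q := by
          have : (2 : ℕ) ^ 3 ∣ 2 ^ Nat.size q := pow_dvd_pow 2 hsz
          simpa using this
        have : 4 * j - 1 = q + 8 * ((2 * k - 1) * c) := by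
          rw [heq, hc]; ring
        omega
    · have : (2 : ℕ) ∣ 4 * j - 1 := ⟨2 ^ r' * (q + (2 * k - 1) * 2 ^ Nat.size q), by
        rw [heq, pow_succ]; ring⟩
      omega
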